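/- Let k, L > 1, κ : {1,…,k-1} × ℕ → ℤ/L, and let b(n) = exp(2πi/L · Σ_q κ(s_q, w_q)) where n = Σ_q s_q k^{w_q} in base k. Suppose there exist N ≥ 0 and l > 0 such that b(N + t·l) = b(N) for all t ≥ 0. Then there exists A ∈ ℕ and an L-th root of unity h such that b(s·k^{A+y}) = h^{s·k^y} for all s ∈ {1,…,k-1} and all y ∈ ℕ; equivalently κ(s, A+y) ≡ κ(1,A)·s·k^y (mod L). -/

import Mathlib

open scoped BigOperators

section Aux

variable {k L : ℕ}

/-- shifted digit-list sum -/
def FLsum (L : ℕ) (κ : ℕ → ℕ → ZMod L) (lst : List ℕ) (C : ℕ) : ZMod L :=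
  ∑ y ∈ Finset.range lst.length, if lst.getD y 0 ≠ 0 then κ (lst.getD y 0) (y + C) else 0

lemma FLsum_append (κ : ℕ → ℕ → ZMod L) (a b : List ℕ) (C : ℕ) :
    FLsum L κ (a ++ b) C = FLsum L κ a C + FLsum L κ b (a.length + C) := by
  unfold FLsum
  rw [List.length_append, Finset.sum_range_add]
  congr 1
  · refine Finset.sum_congr rfl fun y hy => ?_
    rw [List.getD_append _ _ _ _ (Finset.mem_range.mp hy)]
  · refine Finset.sum_congr rfl fun y _ => ?_
    rw [List.getD_append_right _ _ _ _ (Nat.le_add_right _ _), Nat.add_sub_cancel_left]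
    ring_nf

lemma FLsum_replicate (κ : ℕ → ℕ → ZMod L) (j C : ℕ) :
    FLsum L κ (List.replicate j 0) C = 0 := by
  unfold FLsum
  refine Finset.sum_eq_zero fun y hy => ?_
  simp [List.getD_eq_getElem?_getD]

end Aux
section Aux2
variable {k L : ℕ}

lemma digits_len_le_of_lt_pow (hk : 1 < k) {r D : ℕ} (hr : r < k ^ D) :
    (Nat.digits k r).length ≤ D := by
  rcases Nat.eq_zero_or_pos r with rfl | hr0
  · simp
  · rw [Nat.digits_len k r hk hr0.ne']
    have := (Nat.log_lt_iff_lt_pow hk hr0.ne').mpr hr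
    omega

lemma FLsum_digits_split (hk : 1 < k) (κ : ℕ → ℕ → ZMod L) {r a D : ℕ}
    (ha : 0 < a) (hr : r < k ^ D) (C : ℕ) :
    FLsum L κ (Nat.digits k (r + k ^ D * a)) C =
      FLsum L κ (Nat.digits k r) C + FLsum L κ (Nat.digits k a) (D + C) := by
  have hlen : (Nat.digits k r).length ≤ D := digits_len_le_of_lt_pow hk hr
  obtain ⟨j, hj⟩ := Nat.exists_eq_add_of_le hlen
  have hdig : Nat.digits k r ++ List.replicate j 0 ++ Nat.digits k a
      = Nat.digits k (r + k ^ D * a) := by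
    rw [Nat.digits_append_zeroes_append_digits hk ha, ← hj]
  rw [← hdig, FLsum_append, FLsum_append, FLsum_replicate]
  simp only [List.length_append, List.length_replicate, add_zero]
  rw [← hj]

lemma FLsum_digits_single (hk : 1 < k) (κ : ℕ → ℕ → ZMod L) {s : ℕ}
    (h1 : 0 < s) (h2 : s < k) (C : ℕ) :
    FLsum L κ (Nat.digits k s) C = κ s C := by
  have : Nat.digits k s = [s] := by
    rw [Nat.digits_def' hk h1, Nat.mod_eq_of_lt h2, Nat.div_eq_of_lt h2]
    simp
  rw [this]
  unfold FLsum
  simp [h1.ne']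

end Aux2
section Aux3
variable {k L : ℕ}

/-- the natural-number exponent sum appearing in tmUnit -/
def Snat (k L : ℕ) (κ : ℕ → ℕ → ZMod L) (n : ℕ) : ℕ :=
  ∑ y ∈ Finset.range (Nat.digits k n).length,
    if (Nat.digits k n).getD y 0 ≠ 0 then (κ ((Nat.digits k n).getD y 0) y).val else 0

lemma Snat_cast (hL : 0 < L) (κ : ℕ → ℕ → ZMod L) (n : ℕ) :
    ((Snat k L κ n : ℕ) : ZMod L) = FLsum L κ (Nat.digits k n) 0 := by
  haveI : NeZero L := ⟨hL.ne'⟩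
  unfold Snat FLsum
  push_cast
  refine Finset.sum_congr rfl fun y _ => ?_
  split
  · rw [ZMod.natCast_val, ZMod.cast_id, add_zero]
  · simp

lemma exp_eq_exp_iff_zmod (hL : 0 < L) (a b : ℕ) :
    Complex.exp (2 * Real.pi * Complex.I * (a : ℂ) / L)
      = Complex.exp (2 * Real.pi * Complex.I * (b : ℂ) / L)
    ↔ ((a : ZMod L) = (b : ZMod L)) := by
  rw [Complex.exp_eq_exp_iff_exists_int, ZMod.natCast_eq_natCast_iff]
  have hL' : (L : ℂ) ≠ 0 := Nat.cast_ne_zero.mpr hL.ne'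
  have h2pi : (2 * (Real.pi : ℂ) * Complex.I) ≠ 0 := by
    simp [Real.pi_ne_zero, Complex.I_ne_zero]
  constructor
  · rintro ⟨m, hm⟩
    have h1 : 2 * (Real.pi : ℂ) * Complex.I * (a : ℂ)
        = 2 * (Real.pi : ℂ) * Complex.I * ((b : ℂ) + m * L) := by
      field_simp at hm
      linear_combination (2 * (Real.pi : ℂ) * Complex.I) * hm
    have key : (a : ℂ) = (b : ℂ) + m * L := mul_left_cancel₀ h2pi h1
    have key2 : (a : ℤ) = (b : ℤ) + m * L := by exact_mod_cast key
    exact (Nat.modEq_iff_dvd).mpr ⟨-m, by linarith⟩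
  · intro hmod
    obtain ⟨m, hm⟩ := (Nat.modEq_iff_dvd).mp hmod
    refine ⟨-m, ?_⟩
    have key : (a : ℂ) = (b : ℂ) - (L : ℂ) * m := by
      have : (a : ℤ) = (b : ℤ) - L * m := by omega
      exact_mod_cast this
    rw [key]
    push_cast
    field_simp
    ring

end Aux3

/-- b(n) = exp(2πi/L · Σ_q κ(s_q,w_q)) over the nonzero base-k digits of n. -/
noncomputable def tmUnit (k L : ℕ) (κ : ℕ → ℕ → ZMod L) (n : ℕ) : ℂ :=
  Complex.exp (2 * Real.pi * Complex.I *
    ((∑ y ∈ Finset.range (Nat.digits k n).length,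
      if (Nat.digits k n).getD y 0 ≠ 0 then (κ ((Nat.digits k n).getD y 0) y).val else 0 : ℕ)) / L)

lemma tmUnit_eq_exp (k L : ℕ) (κ : ℕ → ℕ → ZMod L) (n : ℕ) :
    tmUnit k L κ n = Complex.exp (2 * Real.pi * Complex.I * (Snat k L κ n : ℂ) / L) := rfl

lemma tmUnit_eq_iff {k L : ℕ} (hL : 0 < L) (κ : ℕ → ℕ → ZMod L) (m n : ℕ) :
    tmUnit k L κ m = tmUnit k L κ n ↔
      FLsum L κ (Nat.digits k m) 0 = FLsum L κ (Nat.digits k n) 0 := by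
  rw [tmUnit_eq_exp, tmUnit_eq_exp, exp_eq_exp_iff_zmod hL, Snat_cast hL, Snat_cast hL]

lemma FLsum_nil {L : ℕ} (κ : ℕ → ℕ → ZMod L) (C : ℕ) : FLsum L κ [] C = 0 := by
  unfold FLsum; simp

lemma FLsum_single_pow {k L : ℕ} (hk : 1 < k) (κ : ℕ → ℕ → ZMod L) {s : ℕ}
    (h1 : 0 < s) (h2 : s < k) (E : ℕ) :
    FLsum L κ (Nat.digits k (s * k ^ E)) 0 = κ s E := by
  have h : s * k ^ E = 0 + k ^ E * s := by ring
  rw [h, FLsum_digits_split hk κ h1 (pow_pos (by omega) E), Nat.digits_zero, FLsum_nil,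
    FLsum_digits_single hk κ h1 h2, zero_add, add_zero]
/-- if some equally spaced subsequence of b is constant, then there are
A ∈ ℕ and an L-th root of unity h with b(s·k^{A+y}) = h^{s·kʸ} for all digits s and
y ∈ ℕ; equivalently κ(s,A+y) ≡ κ(1,A)·s·kʸ (mod L). -/
theorem stmt_9 (k L : ℕ) (hk : 1 < k) (hL : 1 < L) (κ : ℕ → ℕ → ZMod L)
    (N l : ℕ) (hl : 0 < l)
    (hper : ∀ t : ℕ, tmUnit k L κ (N + t * l) = tmUnit k L κ N) :
    ∃ A : ℕ, ∃ h : ℂ, h ^ L = 1 ∧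
      (∀ s y : ℕ, 1 ≤ s → s ≤ k - 1 →
        tmUnit k L κ (s * k ^ (A + y)) = h ^ (s * k ^ y)) ∧
      (∀ s y : ℕ, 1 ≤ s → s ≤ k - 1 →
        κ s (A + y) = κ 1 A * (s : ZMod L) * (k : ZMod L) ^ y) := by
  have hL0 : 0 < L := by omega
  -- eventual periodicity of E ↦ k^E mod l
  obtain ⟨E0, T, hT, hbase⟩ : ∃ E0 T : ℕ, 0 < T ∧ k ^ (E0 + T) ≡ k ^ E0 [MOD l] := by
    obtain ⟨i, j, hne, heq⟩ := Fintype.exists_ne_map_eq_of_card_lt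
      (fun E : Fin (l + 1) => (⟨(k ^ (E : ℕ)) % l, Nat.mod_lt _ hl⟩ : Fin l))
      (by simp)
    have heq' : (k ^ (i : ℕ)) % l = (k ^ (j : ℕ)) % l := congrArg Fin.val heq
    rcases (Fin.val_ne_of_ne hne).lt_or_gt with hlt | hlt
    · refine ⟨i, (j : ℕ) - i, by omega, ?_⟩
      rw [show (i : ℕ) + ((j : ℕ) - (i : ℕ)) = j by omega]
      exact heq'.symm
    · refine ⟨j, (i : ℕ) - j, by omega, ?_⟩
      rw [show (j : ℕ) + ((i : ℕ) - (j : ℕ)) = i by omega]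
      exact heq'
  have hstep : ∀ E, E0 ≤ E → k ^ (E + T) ≡ k ^ E [MOD l] := by
    intro E hE
    obtain ⟨d, rfl⟩ := Nat.exists_eq_add_of_le hE
    have h1 : k ^ (E0 + T) * k ^ d ≡ k ^ E0 * k ^ d [MOD l] := hbase.mul_right _
    rw [← pow_add, ← pow_add] at h1
    rw [show E0 + d + T = E0 + T + d by ring]
    exact h1
  have hiter : ∀ E i, E0 ≤ E → k ^ (E + T * i) ≡ k ^ E [MOD l] := by
    intro E i hE
    induction i with
    | zero => simpa using Nat.ModEq.refl _
    | succ i ih =>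
      rw [show E + T * (i + 1) = (E + T * i) + T by ring]
      exact (hstep _ (by omega)).trans ih
  set aseq : ℕ → ℕ := fun j => ∑ i ∈ Finset.range j, k ^ (T * i) with haseq
  have haseq_succ : ∀ j, aseq (j + 1) = aseq j + k ^ (T * j) * 1 := by
    intro j; simp [haseq, Finset.sum_range_succ]
  have haseq_lt : ∀ j, aseq j < k ^ (T * j) := by
    intro j
    induction j with
    | zero => simp [haseq]
    | succ j ih =>
      have h2 : 2 ≤ k ^ T := le_trans hk (by
        calc k = k ^ 1 := (pow_one k).symm
        _ ≤ k ^ T := Nat.pow_le_pow_right (by omega) hT)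
      have h3 : k ^ (T * (j + 1)) = k ^ (T * j) * k ^ T := by ring
      have h4 : k ^ (T * j) * 2 ≤ k ^ (T * j) * k ^ T :=
        Nat.mul_le_mul_left _ h2
      rw [haseq_succ]
      omega
  have haseq_pos : ∀ j, 0 < j → 0 < aseq j := by
    intro j hj
    have : k ^ (T * 0) ≤ aseq j :=
      Finset.single_le_sum (f := fun i => k ^ (T * i)) (fun i _ => Nat.zero_le _)
        (Finset.mem_range.mpr hj)
    simpa using lt_of_lt_of_le (by positivity) this
  -- periodicity hypothesis in ZMod form
  have hFper : ∀ t, FLsum L κ (Nat.digits k (N + t * l)) 0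
      = FLsum L κ (Nat.digits k N) 0 := fun t => (tmUnit_eq_iff hL0 κ _ _).mp (hper t)
  -- multiples of l have vanishing shifted digit sums
  have hA0 : ∀ n, 0 < n → l ∣ n → FLsum L κ (Nat.digits k n) N = 0 := by
    intro n hn hdvd
    obtain ⟨m, rfl⟩ := hdvd
    have h1 := hFper (m * k ^ N)
    rw [show N + m * k ^ N * l = N + k ^ N * (l * m) by ring,
      FLsum_digits_split hk κ hn (Nat.lt_pow_self (n := N) hk) 0, add_zero] at h1
    exact add_eq_left.mp h1
  -- the key identity
  have hK : ∀ a D, 0 < a → l < k ^ D → FLsum L κ (Nat.digits k a) (D + N)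
      = - FLsum L κ (Nat.digits k (l - (k ^ D * a) % l)) N := by
    intro a D ha hlD
    obtain ⟨ρ, q, hρl, hsum, hrρ⟩ : ∃ ρ q, ρ < l ∧ k ^ D * a = ρ + l * q ∧
        l - (k ^ D * a) % l = l - ρ :=
      ⟨(k ^ D * a) % l, (k ^ D * a) / l, Nat.mod_lt _ hl,
        by rw [Nat.mod_add_div], rfl⟩
    set r := l - (k ^ D * a) % l with hr
    have hdvd : l ∣ r + k ^ D * a := by
      refine ⟨1 + q, ?_⟩
      rw [hrρ, hsum, mul_add, mul_one]
      omega
    have hrD : r < k ^ D := by omega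
    have h0 := hA0 (r + k ^ D * a) (by omega) hdvd
    rw [FLsum_digits_split hk κ ha hrD N] at h0
    exact eq_neg_of_add_eq_zero_right h0
  have hFLaseq : ∀ j X, FLsum L κ (Nat.digits k (aseq j)) X
      = ∑ i ∈ Finset.range j, κ 1 (T * i + X) := by
    intro j X
    induction j with
    | zero =>
      simp only [haseq, Finset.range_zero, Finset.sum_empty]
      simp [FLsum_nil]
    | succ j ih =>
      rw [haseq_succ, FLsum_digits_split hk κ one_pos (haseq_lt j) X, ih,
        Finset.sum_range_succ, FLsum_digits_single hk κ one_pos hk]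
  have hmodj : ∀ D j, E0 ≤ D → k ^ D * aseq j ≡ k ^ D * j [MOD l] := by
    intro D j hD
    induction j with
    | zero =>
      simp only [haseq, Finset.range_zero, Finset.sum_empty, mul_zero, Nat.mul_zero]
      exact Nat.ModEq.refl _
    | succ j ih =>
      have h1 : k ^ D * aseq (j + 1) = k ^ D * aseq j + k ^ (D + T * j) := by
        rw [haseq_succ]; ring
      have h2 : k ^ D * (j + 1) = k ^ D * j + k ^ D := by ring
      rw [h1, h2]
      exact ih.add (hiter D j hD)
  have hI : ∀ s D, 0 < s → s < k → l < k ^ D →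
      κ s (D + N) = - FLsum L κ (Nat.digits k (l - (k ^ D * s) % l)) N := by
    intro s D hs hsk hlD
    have h1 := hK s D hs hlD
    rwa [FLsum_digits_single hk κ hs hsk] at h1
  have hII : ∀ j D, 0 < j → E0 ≤ D → l < k ^ D →
      ∑ i ∈ Finset.range j, κ 1 (T * i + (D + N))
        = - FLsum L κ (Nat.digits k (l - (k ^ D * j) % l)) N := by
    intro j D hj hD hlD
    have h1 := hK (aseq j) D (haseq_pos j hj) hlD
    rw [hFLaseq] at h1
    rwa [show (k ^ D * aseq j) % l = (k ^ D * j) % l from hmodj D j hD] at h1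
  have hshift : ∀ D i, E0 ≤ D → l < k ^ D → κ 1 (T * i + (D + N)) = κ 1 (D + N) := by
    intro D i hD hlD
    have e1 := hI 1 (D + T * i) one_pos hk
      (lt_of_lt_of_le hlD (Nat.pow_le_pow_right (by omega) (by omega)))
    have e2 := hI 1 D one_pos hk hlD
    have hm : (k ^ (D + T * i) * 1) % l = (k ^ D * 1) % l := by
      simpa [Nat.ModEq] using hiter D i hD
    rw [hm] at e1
    calc κ 1 (T * i + (D + N)) = κ 1 ((D + T * i) + N) := by rw [show T * i + (D + N) = (D + T * i) + N by ring]
    _ = - FLsum L κ (Nat.digits k (l - (k ^ D * 1) % l)) N := e1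
    _ = κ 1 (D + N) := e2.symm
  have hmulS : ∀ s D, 0 < s → s < k → E0 ≤ D → l < k ^ D →
      κ s (D + N) = (s : ZMod L) * κ 1 (D + N) := by
    intro s D hs hsk hD hlD
    have e1 := hI s D hs hsk hlD
    have e2 := hII s D hs hD hlD
    rw [Finset.sum_congr rfl (fun i _ => hshift D i hD hlD), Finset.sum_const,
      Finset.card_range, nsmul_eq_mul] at e2
    rw [e1, ← e2]
  have hstep1 : ∀ D, E0 ≤ D → l < k ^ D →
      κ 1 ((D + 1) + N) = (k : ZMod L) * κ 1 (D + N) := by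
    intro D hD hlD
    have e1 := hI 1 (D + 1) one_pos hk
      (lt_of_lt_of_le hlD (Nat.pow_le_pow_right (by omega) (by omega)))
    have e2 := hII k D (by omega) hD hlD
    rw [Finset.sum_congr rfl (fun i _ => hshift D i hD hlD), Finset.sum_const,
      Finset.card_range, nsmul_eq_mul] at e2
    have hm : (k ^ (D + 1) * 1) % l = (k ^ D * k) % l := by rw [mul_one, pow_succ]
    rw [hm] at e1
    rw [e1, ← e2]
  set D0 := E0 + l with hD0
  set A := D0 + N with hA
  have hcond : ∀ y, E0 ≤ D0 + y ∧ l < k ^ (D0 + y) := by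
    intro y
    refine ⟨by omega, lt_of_lt_of_le (Nat.lt_pow_self (n := l) hk)
      (Nat.pow_le_pow_right (by omega) (by omega))⟩
  have hy1 : ∀ y, κ 1 (A + y) = (k : ZMod L) ^ y * κ 1 A := by
    intro y
    induction y with
    | zero => simp
    | succ y ih =>
      have h1 := hstep1 (D0 + y) (hcond y).1 (hcond y).2
      rw [show A + (y + 1) = ((D0 + y) + 1) + N by omega, h1,
        show (D0 + y) + N = A + y by omega, ih, pow_succ]
      ring
  have hκ : ∀ s y : ℕ, 1 ≤ s → s ≤ k - 1 →
      κ s (A + y) = κ 1 A * (s : ZMod L) * (k : ZMod L) ^ y := by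
    intro s y hs1 hsk
    have hsk' : s < k := by omega
    have h1 := hmulS s (D0 + y) (by omega) hsk' (hcond y).1 (hcond y).2
    rw [show (D0 + y) + N = A + y by omega] at h1
    rw [h1, hy1 y]
    ring
  refine ⟨A, Complex.exp (2 * Real.pi * Complex.I * ((κ 1 A).val : ℂ) / L), ?_, ?_, hκ⟩
  · rw [← Complex.exp_nat_mul, Complex.exp_eq_one_iff]
    refine ⟨((κ 1 A).val : ℤ), ?_⟩
    have hLne : (L : ℂ) ≠ 0 := Nat.cast_ne_zero.mpr hL0.ne'
    field_simp
    push_cast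
    ring
  · intro s y hs1 hsk
    have hsk' : s < k := by omega
    have hs0 : 0 < s := by omega
    rw [← Complex.exp_nat_mul, tmUnit_eq_exp]
    have hrhs : ((s * k ^ y : ℕ) : ℂ) * (2 * Real.pi * Complex.I * ((κ 1 A).val : ℂ) / L)
        = 2 * Real.pi * Complex.I * (((κ 1 A).val * (s * k ^ y) : ℕ) : ℂ) / L := by
      push_cast
      ring
    rw [hrhs, exp_eq_exp_iff_zmod hL0]
    haveI : NeZero L := ⟨hL0.ne'⟩
    rw [Snat_cast hL0, FLsum_single_pow hk κ hs0 hsk']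
    push_cast
    rw [ZMod.natCast_val, ZMod.cast_id, hκ s y hs1 hsk]
    ring
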